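/- Optimization identity: for positive reals Δ_2, ..., Δ_K and the functions g_a(x) = min(1, x)·Δ_a, the supremum over (x_2,...,x_K) ∈ (ℝ_+)^{K-1} of min_{a≠1} g_a(x_a) / (1 + x_2 + ... + x_K) equals 1 / (1/Δ_min + Σ_{a=2}^K 1/Δ_a), with the supremum attained at x_a = Δ_min/Δ_a, where Δ_min = min_a Δ_a. -/

import Mathlib

open scoped BigOperators

/-- Optimization identity: for positive `Δ_a` and `g_a(x) = min(1,x)·Δ_a`, the value
`1 / (1/Δ_min + Σ_a 1/Δ_a)` is the greatest element of the set of values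
`(min_a g_a(x_a)) / (1 + Σ_a x_a)` over `x ∈ (ℝ₊)^n` (hence the supremum, attained),
and it is attained at `x_a = Δ_min / Δ_a`. -/
theorem min_clipped_ratio_optimization {n : ℕ} [Nonempty (Fin n)]
    (Δ : Fin n → ℝ) (hΔ : ∀ a, 0 < Δ a) :
    IsGreatest
      {v : ℝ | ∃ x : Fin n → ℝ, (∀ a, 0 ≤ x a) ∧
        v = (⨅ a, min 1 (x a) * Δ a) / (1 + ∑ a, x a)}
      (1 / (1 / (⨅ a, Δ a) + ∑ a, 1 / Δ a)) ∧
    (⨅ a, min 1 ((⨅ b, Δ b) / Δ a) * Δ a) / (1 + ∑ a, (⨅ b, Δ b) / Δ a)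
      = 1 / (1 / (⨅ a, Δ a) + ∑ a, 1 / Δ a) := by
  obtain ⟨a0, ha0⟩ := Finite.exists_min Δ
  have hm : (⨅ a, Δ a) = Δ a0 :=
    le_antisymm (ciInf_le (Finite.bddBelow_range _) a0) (le_ciInf ha0)
  have hmpos : 0 < Δ a0 := hΔ a0
  have hSpos : 0 < 1 / Δ a0 + ∑ a, 1 / Δ a := by
    have : (0:ℝ) ≤ ∑ a, 1 / Δ a :=
      Finset.sum_nonneg fun a _ => (one_div_pos.2 (hΔ a)).le
    have h1 : (0:ℝ) < 1 / Δ a0 := one_div_pos.2 hmpos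
    linarith
  -- value of the objective at the optimal point
  have hattain : (⨅ a, min 1 ((⨅ b, Δ b) / Δ a) * Δ a) / (1 + ∑ a, (⨅ b, Δ b) / Δ a)
      = 1 / (1 / (⨅ a, Δ a) + ∑ a, 1 / Δ a) := by
    rw [hm]
    have hterm : ∀ a, min 1 (Δ a0 / Δ a) * Δ a = Δ a0 := by
      intro a
      have h1 : Δ a0 / Δ a ≤ 1 := (div_le_one (hΔ a)).2 (ha0 a)
      rw [min_eq_right h1, div_mul_cancel₀ _ (hΔ a).ne']
    have hinf : (⨅ a, min 1 (Δ a0 / Δ a) * Δ a) = Δ a0 := by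
      simp only [hterm]; exact ciInf_const
    rw [hinf]
    have hsum : ∑ a, Δ a0 / Δ a = Δ a0 * ∑ a, 1 / Δ a := by
      rw [Finset.mul_sum]
      exact Finset.sum_congr rfl fun a _ => (mul_one_div _ _).symm
    rw [hsum, Finset.mul_sum]
    have hden : (0:ℝ) < 1 + ∑ a, Δ a0 * (1 / Δ a) := by
      have : (0:ℝ) ≤ ∑ a, Δ a0 * (1 / Δ a) :=
        Finset.sum_nonneg fun a _ => mul_nonneg hmpos.le (one_div_pos.2 (hΔ a)).le
      linarith
    rw [div_eq_div_iff hden.ne' hSpos.ne']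
    field_simp
    rw [hsum]
  refine ⟨⟨⟨fun a => Δ a0 / Δ a, fun a => (div_pos hmpos (hΔ a)).le, by rw [← hattain, hm]⟩, ?_⟩, hattain⟩
  rintro v ⟨x, hx, rfl⟩
  rw [hm]
  set c := ⨅ a, min 1 (x a) * Δ a with hc
  have hcle : ∀ a, c ≤ min 1 (x a) * Δ a :=
    fun a => ciInf_le (Finite.bddBelow_range _) a
  have hc0 : 0 ≤ c :=
    le_ciInf fun a => mul_nonneg (le_min zero_le_one (hx a)) (hΔ a).le
  have hcm : c ≤ Δ a0 := by
    have := hcle a0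
    have h2 : min 1 (x a0) * Δ a0 ≤ Δ a0 := by
      nlinarith [min_le_left 1 (x a0)]
    linarith
  have hcx : ∀ a, c / Δ a ≤ x a := by
    intro a
    rw [div_le_iff₀ (hΔ a)]
    have := hcle a
    nlinarith [min_le_right 1 (x a), hΔ a, hx a]
  have hsumx : (0:ℝ) ≤ ∑ a, x a := Finset.sum_nonneg fun a _ => hx a
  rw [div_le_div_iff₀ (by linarith) hSpos]
  have hkey : c * (1 / Δ a0 + ∑ a, 1 / Δ a) = c / Δ a0 + ∑ a, c / Δ a := by
    rw [mul_add, Finset.mul_sum, mul_one_div]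
    congr 1
    exact Finset.sum_congr rfl fun a _ => mul_one_div _ _
  rw [hkey, one_mul]
  have h1 : c / Δ a0 ≤ 1 := by rw [div_le_one hmpos]; exact hcm
  have h2 : ∑ a, c / Δ a ≤ ∑ a, x a := Finset.sum_le_sum fun a _ => hcx a
  linarith
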